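/- arXiv:1804.05270 — 3 statements merged into one kernel-verified Lean document; each statement's English description precedes it below -/
import Mathlib

section
/- Let A be a *-algebra and π_i : A → B(H_i), i = 1,2, two *-representations on Hilbert spaces. If there exist A-equivariant linear isometries V : H_1 → H_2 and W : H_2 → H_1, then π_1 and π_2 are unitarily equivalent, i.e., there is an A-equivariant unitary U : H_1 → H_2. -/
open scoped InnerProductSpace

section Aux

variable {A : Type*} [Ring A] [StarRing A] [Algebra ℂ A] [StarModule ℂ A]
variable {H₁ H₂ : Type*} [NormedAddCommGroup H₁] [InnerProductSpace ℂ H₁] [CompleteSpace H₁]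
  [NormedAddCommGroup H₂] [InnerProductSpace ℂ H₂] [CompleteSpace H₂]

/-- The adjoint of an equivariant isometry is equivariant. -/
lemma aux_adjoint_equivariant (π₁ : A →⋆ₐ[ℂ] (H₁ →L[ℂ] H₁)) (π₂ : A →⋆ₐ[ℂ] (H₂ →L[ℂ] H₂))
    (W : H₂ →ₗᵢ[ℂ] H₁) (hW : ∀ (a : A) (x : H₂), W (π₂ a x) = π₁ a (W x)) (a : A) (z : H₁) :
    (ContinuousLinearMap.adjoint W.toContinuousLinearMap) (π₁ a z)
      = π₂ a ((ContinuousLinearMap.adjoint W.toContinuousLinearMap) z) := by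
  set Wc : H₂ →L[ℂ] H₁ := W.toContinuousLinearMap with hWc
  have hWcapp : ∀ y, Wc y = W y := fun _ => rfl
  have hadj1 : ContinuousLinearMap.adjoint (π₁ a) = π₁ (star a) := by
    rw [← ContinuousLinearMap.star_eq_adjoint, ← map_star]
  have hadj2 : ContinuousLinearMap.adjoint (π₂ a) = π₂ (star a) := by
    rw [← ContinuousLinearMap.star_eq_adjoint, ← map_star]
  apply ext_inner_right ℂ
  intro u
  calc ⟪(ContinuousLinearMap.adjoint Wc) (π₁ a z), u⟫_ℂ
      = ⟪π₁ a z, Wc u⟫_ℂ := ContinuousLinearMap.adjoint_inner_left Wc _ _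
    _ = ⟪z, (ContinuousLinearMap.adjoint (π₁ a)) (Wc u)⟫_ℂ :=
        (ContinuousLinearMap.adjoint_inner_right (π₁ a) _ _).symm
    _ = ⟪z, π₁ (star a) (W u)⟫_ℂ := by rw [hadj1, hWcapp]
    _ = ⟪z, W (π₂ (star a) u)⟫_ℂ := by rw [← hW]
    _ = ⟪z, Wc (π₂ (star a) u)⟫_ℂ := by rw [hWcapp]
    _ = ⟪(ContinuousLinearMap.adjoint Wc) z, π₂ (star a) u⟫_ℂ :=
        (ContinuousLinearMap.adjoint_inner_left Wc _ _).symm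
    _ = ⟪(ContinuousLinearMap.adjoint Wc) z, (ContinuousLinearMap.adjoint (π₂ a)) u⟫_ℂ := by
        rw [hadj2]
    _ = ⟪π₂ a ((ContinuousLinearMap.adjoint Wc) z), u⟫_ℂ :=
        ContinuousLinearMap.adjoint_inner_right (π₂ a) _ _

end Aux

/-- If two *-representations of a *-algebra `A` on Hilbert spaces each admit an
`A`-equivariant linear isometry into the other, then they are unitarily
equivalent via an `A`-equivariant unitary. -/
theorem stmt7 {A : Type*} [Ring A] [StarRing A] [Algebra ℂ A] [StarModule ℂ A]
    {H₁ H₂ : Type*} [NormedAddCommGroup H₁] [InnerProductSpace ℂ H₁] [CompleteSpace H₁]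
    [NormedAddCommGroup H₂] [InnerProductSpace ℂ H₂] [CompleteSpace H₂]
    (π₁ : A →⋆ₐ[ℂ] (H₁ →L[ℂ] H₁)) (π₂ : A →⋆ₐ[ℂ] (H₂ →L[ℂ] H₂))
    (V : H₁ →ₗᵢ[ℂ] H₂) (hV : ∀ (a : A) (x : H₁), V (π₁ a x) = π₂ a (V x))
    (W : H₂ →ₗᵢ[ℂ] H₁) (hW : ∀ (a : A) (x : H₂), W (π₂ a x) = π₁ a (W x)) :
    ∃ U : H₁ ≃ₗᵢ[ℂ] H₂, ∀ (a : A) (x : H₁), U (π₁ a x) = π₂ a (U x) := by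
  classical
  set Wc : H₂ →L[ℂ] H₁ := W.toContinuousLinearMap with hWc
  set W' : H₁ →L[ℂ] H₂ := ContinuousLinearMap.adjoint Wc with hW'def
  have hWcapp : ∀ y, Wc y = W y := fun _ => rfl
  -- W' is a left inverse of W
  have hW'W : ∀ y : H₂, W' (W y) = y := by
    intro y
    apply ext_inner_right ℂ
    intro z
    rw [hW'def, show (W y : H₁) = Wc y from rfl, ContinuousLinearMap.adjoint_inner_left]
    rw [hWcapp]
    exact W.inner_map_map y z
  -- W' is equivariant
  have hW' : ∀ (a : A) (z : H₁), W' (π₁ a z) = π₂ a (W' z) := by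
    rw [hW'def, hWc]
    exact aux_adjoint_equivariant π₁ π₂ W hW
  -- the equivariant isometry T = W ∘ V of H₁
  set T : H₁ →ₗᵢ[ℂ] H₁ := W.comp V with hTdef
  have hTapp : ∀ x, T x = W (V x) := fun _ => rfl
  have hT : ∀ (a : A) (x : H₁), T (π₁ a x) = π₁ a (T x) := by
    intro a x; rw [hTapp, hTapp, hV, hW]
  set Tl : H₁ →ₗ[ℂ] H₁ := T.toLinearMap with hTldef
  have hTlapp : ∀ x, Tl x = T x := fun _ => rfl
  -- the range of W
  set RW : Submodule ℂ H₁ := LinearMap.range W.toLinearMap with hRWdef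
  have hRWmem : ∀ u, u ∈ RW ↔ ∃ y, W y = u := by
    intro u; rw [hRWdef, LinearMap.mem_range]; rfl
  have hRWclosed : IsClosed (RW : Set H₁) := by
    have : (RW : Set H₁) = Set.range W := by
      rw [hRWdef]; ext u; simp [LinearMap.mem_range]
    rw [this]
    exact W.isometry.isClosedEmbedding.isClosed_range
  set N : Submodule ℂ H₁ := RWᗮ with hNdef
  -- N is π₁-invariant
  have hπadj : ∀ a : A, ContinuousLinearMap.adjoint (π₁ a) = π₁ (star a) := by
    intro a; rw [← ContinuousLinearMap.star_eq_adjoint, ← map_star]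
  have hNinv : ∀ (a : A) (x : H₁), x ∈ N → π₁ a x ∈ N := by
    intro a x hx
    rw [hNdef, Submodule.mem_orthogonal]
    intro u hu
    obtain ⟨y, rfl⟩ := (hRWmem u).mp hu
    have : ⟪(W y : H₁), π₁ a x⟫_ℂ = ⟪π₁ (star a) (W y), x⟫_ℂ := by
      rw [← hπadj a, ContinuousLinearMap.adjoint_inner_left]
    rw [this, ← hW]
    exact (Submodule.mem_orthogonal _ _).mp hx _ ((hRWmem _).mpr ⟨_, rfl⟩)
  -- the subspaces Tⁿ N and their closed span C
  set Sn : ℕ → Submodule ℂ H₁ := fun n => N.map (Tl ^ n) with hSndef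
  set S : Submodule ℂ H₁ := ⨆ n, Sn n with hSdef
  set C : Submodule ℂ H₁ := S.topologicalClosure with hCdef
  have hCclosed : IsClosed (C : Set H₁) := S.isClosed_topologicalClosure
  haveI : CompleteSpace C := hCclosed.completeSpace_coe
  have hCcoe : (C : Set H₁) = closure (S : Set H₁) := rfl
  have hSC : S ≤ C := S.le_topologicalClosure
  have hNS : N ≤ S := by
    have h0 : Sn 0 = N := by
      show N.map (Tl ^ 0) = N
      rw [pow_zero, Module.End.one_eq_id, Submodule.map_id]
    rw [hSdef, ← h0]; exact le_iSup Sn 0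
  have hNC : N ≤ C := le_trans hNS hSC
  -- Tⁿ is equivariant
  have hTn : ∀ (n : ℕ) (a : A) (y : H₁), (Tl ^ n) (π₁ a y) = π₁ a ((Tl ^ n) y) := by
    intro n
    induction n with
    | zero => intro a y; simp
    | succ n ih =>
      intro a y
      rw [pow_succ, Module.End.mul_apply, Module.End.mul_apply, hTlapp, hTlapp, hT, ih]
  -- S and C are π₁-invariant
  have hSinv : ∀ (a : A) (x : H₁), x ∈ S → π₁ a x ∈ S := by
    intro a x hx
    rw [hSdef] at hx
    refine Submodule.iSup_induction Sn (motive := fun y => π₁ a y ∈ S) hx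
      (fun n y hy => ?_) ?_ (fun u v hu hv => ?_)
    · obtain ⟨w, hw, rfl⟩ := hy
      rw [← hTn]
      have : (Tl ^ n) (π₁ a w) ∈ Sn n := ⟨π₁ a w, hNinv a w hw, rfl⟩
      exact hSdef ▸ le_iSup Sn n this
    · show π₁ a (0 : H₁) ∈ S
      rw [map_zero]; exact S.zero_mem
    · show π₁ a (u + v) ∈ S
      rw [map_add]; exact S.add_mem hu hv
  have hCinv : ∀ (a : A) (x : H₁), x ∈ C → π₁ a x ∈ C := by
    intro a x hx
    have hmt : Set.MapsTo (π₁ a) (S : Set H₁) (C : Set H₁) := fun y hy => hSC (hSinv a y hy)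
    have := hmt.closure_left (π₁ a).continuous hCclosed
    rw [← hCcoe] at this
    exact this hx
  -- S and C are T-invariant
  have hTS : ∀ x ∈ S, T x ∈ S := by
    intro x hx
    rw [hSdef] at hx
    refine Submodule.iSup_induction Sn (motive := fun y => T y ∈ S) hx
      (fun n y hy => ?_) ?_ (fun u v hu hv => ?_)
    · obtain ⟨w, hw, rfl⟩ := hy
      have heq : T ((Tl ^ n) w) = (Tl ^ (n + 1)) w := by
        rw [pow_succ', Module.End.mul_apply, hTlapp]
      rw [heq]
      have : (Tl ^ (n + 1)) w ∈ Sn (n + 1) := ⟨w, hw, rfl⟩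
      exact hSdef ▸ le_iSup Sn (n + 1) this
    · show T (0 : H₁) ∈ S
      rw [map_zero]; exact S.zero_mem
    · show T (u + v) ∈ S
      rw [map_add]; exact S.add_mem hu hv
  have hTC : ∀ x ∈ C, T x ∈ C := by
    intro x hx
    have hmt : Set.MapsTo T (S : Set H₁) (C : Set H₁) := fun y hy => hSC (hTS y hy)
    have := hmt.closure_left T.continuous hCclosed
    rw [← hCcoe] at this
    exact this hx
  -- Cᗮ ⊆ range W
  have hCperpW : ∀ x ∈ Cᗮ, x ∈ RW := by
    intro x hx
    have h1 : Cᗮ ≤ Nᗮ := Submodule.orthogonal_le hNC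
    have h2 : Nᗮ = RW := by
      rw [hNdef, RW.orthogonal_orthogonal_eq_closure,
        hRWclosed.submodule_topologicalClosure_eq]
    exact h2 ▸ h1 hx
  -- Cᗮ is π₁-invariant
  have hCperpinv : ∀ (a : A) (x : H₁), x ∈ Cᗮ → π₁ a x ∈ Cᗮ := by
    intro a x hx
    rw [Submodule.mem_orthogonal]
    intro u hu
    have : ⟪u, π₁ a x⟫_ℂ = ⟪π₁ (star a) u, x⟫_ℂ := by
      rw [← hπadj a, ContinuousLinearMap.adjoint_inner_left]
    rw [this]
    exact (Submodule.mem_orthogonal _ _).mp hx _ (hCinv (star a) u hu)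
  -- the orthogonal projection onto C
  set p : H₁ → H₁ := fun x => (C.orthogonalProjectionOnto x : H₁) with hpdef
  have hp_mem : ∀ x, p x ∈ C := fun x => (C.orthogonalProjectionOnto x).2
  have hq_mem : ∀ x, x - p x ∈ Cᗮ := fun x => C.sub_starProjection_mem_orthogonal x
  have hp_of_mem : ∀ x ∈ C, p x = x := fun x hx => C.starProjection_eq_self_iff.mpr hx
  have hp_of_perp : ∀ x ∈ Cᗮ, p x = 0 := by
    intro x hx
    show ((C.orthogonalProjectionOnto x : C) : H₁) = 0
    rw [Submodule.orthogonalProjectionOnto_apply_of_mem_orthogonal hx]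
    rfl
  have hp_add : ∀ x y, p (x + y) = p x + p y := by
    intro x y; show ((C.orthogonalProjectionOnto (x + y) : C) : H₁) = _; rw [map_add]; rfl
  have hp_smul : ∀ (c : ℂ) x, p (c • x) = c • p x := by
    intro c x; show ((C.orthogonalProjectionOnto (c • x) : C) : H₁) = _; rw [map_smul]; rfl
  -- the projection commutes with the representation
  have hPcomm : ∀ (a : A) (x : H₁), p (π₁ a x) = π₁ a (p x) := by
    intro a x
    have hdec : π₁ a x = π₁ a (p x) + π₁ a (x - p x) := by rw [← map_add]; congr 1; abel
    rw [hdec, hp_add, hp_of_mem _ (hCinv a _ (hp_mem x)),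
      hp_of_perp _ (hCperpinv a _ (hq_mem x)), add_zero]
  -- basic orthogonality facts
  have hVW'perp : ∀ c ∈ C, ∀ o ∈ Cᗮ, ⟪V c, W' o⟫_ℂ = 0 := by
    intro c hc o ho
    rw [hW'def, ContinuousLinearMap.adjoint_inner_right, hWcapp, ← hTapp]
    exact Submodule.inner_right_of_mem_orthogonal (hTC c hc) ho
  have hW'norm : ∀ o ∈ Cᗮ, ‖W' o‖ = ‖o‖ := by
    intro o ho
    obtain ⟨y, rfl⟩ := (hRWmem o).mp (hCperpW o ho)
    rw [hW'W, W.norm_map]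
  -- f is norm-preserving
  have hf_norm : ∀ x, ‖V (p x) + W' (x - p x)‖ = ‖x‖ := by
    intro x
    have h1 : ‖V (p x) + W' (x - p x)‖ * ‖V (p x) + W' (x - p x)‖
        = ‖V (p x)‖ * ‖V (p x)‖ + ‖W' (x - p x)‖ * ‖W' (x - p x)‖ :=
      norm_add_sq_eq_norm_sq_add_norm_sq_of_inner_eq_zero _ _
        (hVW'perp _ (hp_mem x) _ (hq_mem x))
    have h2 : ‖x‖ * ‖x‖ = ‖p x‖ * ‖p x‖ + ‖x - p x‖ * ‖x - p x‖ := by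
      have hx : x = p x + (x - p x) := by abel
      conv_lhs => rw [hx]
      exact norm_add_sq_eq_norm_sq_add_norm_sq_of_inner_eq_zero _ _
        (Submodule.inner_right_of_mem_orthogonal (hp_mem x) (hq_mem x))
    have h3 : ‖V (p x) + W' (x - p x)‖ * ‖V (p x) + W' (x - p x)‖ = ‖x‖ * ‖x‖ := by
      rw [h1, h2, V.norm_map, hW'norm _ (hq_mem x)]
    exact (mul_self_inj (norm_nonneg _) (norm_nonneg _)).mp h3
  have hf_add : ∀ x y, V (p (x + y)) + W' (x + y - p (x + y))
      = (V (p x) + W' (x - p x)) + (V (p y) + W' (y - p y)) := by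
    intro x y
    simp only [hp_add]
    rw [show x + y - (p x + p y) = (x - p x) + (y - p y) by abel, map_add, map_add]
    abel
  have hf_smul : ∀ (c : ℂ) (x : H₁), V (p (c • x)) + W' (c • x - p (c • x))
      = c • (V (p x) + W' (x - p x)) := by
    intro c x
    simp only [hp_smul]
    rw [show c • x - c • p x = c • (x - p x) by rw [← smul_sub], map_smul, map_smul, smul_add]
  obtain ⟨U₀, hU₀app⟩ : ∃ U₀ : H₁ →ₗᵢ[ℂ] H₂, ∀ x, U₀ x = V (p x) + W' (x - p x) :=
    ⟨⟨⟨⟨fun x => V (p x) + W' (x - p x), fun x y => hf_add x y⟩,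
      fun c x => hf_smul c x⟩, hf_norm⟩, fun _ => rfl⟩
  -- values of U₀ on C and Cᗮ
  have hfC : ∀ c ∈ C, U₀ c = V c := by
    intro c hc
    rw [hU₀app]
    simp only [hp_of_mem c hc, sub_self, map_zero, add_zero]
  have hfCperp : ∀ o ∈ Cᗮ, U₀ o = W' o := by
    intro o ho
    rw [hU₀app]
    simp only [hp_of_perp o ho, sub_zero, map_zero, zero_add]
  -- any vector orthogonal to the range of U₀ is zero
  have hqkill : ∀ z : H₂, (∀ x, ⟪U₀ x, z⟫_ℂ = 0) → z = 0 := by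
    intro z hz
    have hz1 : ∀ c ∈ C, ⟪V c, z⟫_ℂ = 0 := by
      intro c hc; rw [← hfC c hc]; exact hz c
    have hz2 : ∀ o ∈ Cᗮ, ⟪o, W z⟫_ℂ = 0 := by
      intro o ho
      have h := hz o
      rw [hfCperp o ho, hW'def, ContinuousLinearMap.adjoint_inner_left, hWcapp] at h
      exact h
    have hWzC : W z ∈ C := by
      have : W z ∈ Cᗮᗮ := (Submodule.mem_orthogonal _ _).mpr hz2
      rwa [C.orthogonal_orthogonal] at this
    have hWzS : ∀ u ∈ S, ⟪u, (W z : H₁)⟫_ℂ = 0 := by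
      intro u hu
      rw [hSdef] at hu
      refine Submodule.iSup_induction Sn (motive := fun u => ⟪u, (W z : H₁)⟫_ℂ = 0) hu
        (fun n y hy => ?_) ?_ (fun u v hu hv => ?_)
      · obtain ⟨w, hw, rfl⟩ := hy
        cases n with
        | zero =>
          simp only [pow_zero, Module.End.one_apply]
          rw [inner_eq_zero_symm]
          exact (Submodule.mem_orthogonal _ _).mp hw _ ((hRWmem _).mpr ⟨z, rfl⟩)
        | succ n =>
          have hmem : (Tl ^ n) w ∈ C := by
            have : (Tl ^ n) w ∈ Sn n := ⟨w, hw, rfl⟩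
            exact hSC (hSdef ▸ le_iSup Sn n this)
          have heq : (Tl ^ (n + 1)) w = T ((Tl ^ n) w) := by
            rw [pow_succ', Module.End.mul_apply, hTlapp]
          rw [heq, hTapp, W.inner_map_map]
          exact hz1 _ hmem
      · show ⟪(0 : H₁), (W z : H₁)⟫_ℂ = 0
        rw [inner_zero_left]
      · show ⟪u + v, (W z : H₁)⟫_ℂ = 0
        rw [inner_add_left, hu, hv, add_zero]
    have hWzCperp : W z ∈ Cᗮ := by
      rw [Submodule.mem_orthogonal]
      intro u hu
      have hclosed : IsClosed {u : H₁ | ⟪u, (W z : H₁)⟫_ℂ = 0} :=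
        isClosed_eq (Continuous.inner continuous_id continuous_const) continuous_const
      have hsub : (S : Set H₁) ⊆ {u : H₁ | ⟪u, (W z : H₁)⟫_ℂ = 0} := fun u hu => hWzS u hu
      have := closure_minimal hsub hclosed
      rw [← hCcoe] at this
      exact this hu
    have hWz0 : W z = 0 := by
      have := (Submodule.mem_orthogonal _ _).mp hWzCperp _ hWzC
      rwa [inner_self_eq_zero] at this
    have : ‖z‖ = 0 := by rw [← W.norm_map z, hWz0, norm_zero]
    exact norm_eq_zero.mp this
  -- U₀ is surjective
  have hsurj : Function.Surjective U₀ := by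
    have hRgclosed : IsClosed ((LinearMap.range U₀.toLinearMap : Submodule ℂ H₂) : Set H₂) := by
      have : ((LinearMap.range U₀.toLinearMap : Submodule ℂ H₂) : Set H₂) = Set.range U₀ := by
        ext u; simp [LinearMap.mem_range]
      rw [this]
      exact U₀.isometry.isClosedEmbedding.isClosed_range
    haveI : CompleteSpace (LinearMap.range U₀.toLinearMap : Submodule ℂ H₂) :=
      hRgclosed.completeSpace_coe
    have hbot : (LinearMap.range U₀.toLinearMap : Submodule ℂ H₂)ᗮ = ⊥ := by
      rw [Submodule.eq_bot_iff]
      intro z hz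
      refine hqkill z fun x => ?_
      exact (Submodule.mem_orthogonal _ _).mp hz _ (LinearMap.mem_range_self _ x)
    have htop : LinearMap.range U₀.toLinearMap = ⊤ := Submodule.orthogonal_eq_bot_iff.mp hbot
    intro y
    obtain ⟨x, hx⟩ : y ∈ LinearMap.range U₀.toLinearMap := htop ▸ Submodule.mem_top
    exact ⟨x, hx⟩
  -- the equivariant unitary
  refine ⟨LinearIsometryEquiv.ofSurjective U₀ hsurj, fun a x => ?_⟩
  have hcoe : ∀ y, (LinearIsometryEquiv.ofSurjective U₀ hsurj) y = U₀ y := fun _ => rfl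
  rw [hcoe, hcoe, hU₀app, hU₀app, hPcomm, ← map_sub, hV, hW', map_add]
end

section
/- Let G be a countably infinite group acting on K^G by the left shift (g·x)(t) = x(g⁻¹t), with the Bernoulli measure κ^G for a probability space (K, κ). If f ∈ L²(κ) has mean zero and norm one, and (R_n)_{n∈ℕ} is a sequence of finite subsets of G such that g·R_n ≠ h·R_k whenever (g, n) ≠ (h, k), then the functions ζ_{n,g}(x) = ∏_{r ∈ g·R_n} f(x(r)) form an orthonormal family in L²(κ^G), and ζ_{n,g} = ρ(g)ζ_{n,1} where ρ is the Koopman representation. -/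
open MeasureTheory

/-- Key factorization lemma. -/
theorem key_lemma {K : Type*} [MeasurableSpace K] (κ : Measure K) [IsProbabilityMeasure κ]
    {G : Type*} [DecidableEq G]
    (μ : Measure (G → K)) [IsProbabilityMeasure μ]
    (hμ : ∀ (R : Finset G) (A : G → Set K), (∀ r, MeasurableSet (A r)) →
      μ {x | ∀ r ∈ R, x r ∈ A r} = ∏ r ∈ R, κ (A r))
    {𝕜 : Type*} [RCLike 𝕜] (S : Finset G) (F : G → K → 𝕜)
    (hmeas : ∀ r, AEStronglyMeasurable (F r) κ) :
    ∫ x, ∏ r ∈ S, F r (x r) ∂μ = ∏ r ∈ S, ∫ k, F r k ∂κ := by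
  classical
  -- strongly measurable representatives
  set F' : G → K → 𝕜 := fun r => (hmeas r).mk (F r) with hF'
  have hF'sm : ∀ r, StronglyMeasurable (F' r) := fun r => (hmeas r).stronglyMeasurable_mk
  have hF'ae : ∀ r, F r =ᵐ[κ] F' r := fun r => (hmeas r).ae_eq_mk
  -- each coordinate map pushes μ to κ
  have hmap : ∀ r : G, μ.map (fun x : G → K => x r) = κ := by
    intro r
    refine Measure.ext fun B hB => ?_
    rw [Measure.map_apply (measurable_pi_apply r) hB]
    have := hμ {r} (fun _ => B) (fun _ => hB)
    simpa [Set.preimage] using this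
  have hcoord : ∀ r : G, (fun x : G → K => F r (x r)) =ᵐ[μ] fun x => F' r (x r) := by
    intro r
    exact ae_eq_comp (measurable_pi_apply r).aemeasurable
      (by rw [hmap r]; exact hF'ae r)
  -- pushforward to the finite product
  letI : MeasureSpace K := ⟨κ⟩
  set π : (G → K) → (↥S → K) := fun x i => x i with hπ
  have hπm : Measurable π := measurable_pi_lambda _ fun i => measurable_pi_apply _
  have hmapπ : μ.map π = (volume : Measure (↥S → K)) := by
    rw [show (volume : Measure (↥S → K)) = Measure.pi (fun _ => κ) from rfl]
    refine (Measure.pi_eq fun A hA => ?_).symm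
    rw [Measure.map_apply hπm (MeasurableSet.univ_pi hA)]
    have : π ⁻¹' Set.univ.pi A =
        {x : G → K | ∀ r ∈ S, x r ∈ (fun r => if h : r ∈ S then A ⟨r, h⟩ else Set.univ) r} := by
      ext x
      simp only [Set.mem_preimage, Set.mem_pi, Set.mem_univ, forall_true_left, Set.mem_setOf_eq]
      constructor
      · intro h r hr; simpa [hr] using h ⟨r, hr⟩
      · intro h i; have := h i i.2; simpa [i.2] using this
    rw [this, hμ _ _ (fun r => by by_cases h : r ∈ S <;> simp [h, hA])]
    rw [← Finset.prod_coe_sort S (fun r => κ (if h : r ∈ S then A ⟨r, h⟩ else Set.univ))]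
    exact Finset.prod_congr rfl fun i _ => by simp [i.2]
  -- chain of equalities
  have step1 : ∫ x, ∏ r ∈ S, F r (x r) ∂μ = ∫ x, ∏ r ∈ S, F' r (x r) ∂μ := by
    refine integral_congr_ae ?_
    have : ∀ᵐ x ∂μ, ∀ r ∈ S, F r (x r) = F' r (x r) := by
      rw [Filter.eventually_all_finset]
      intro r _
      exact hcoord r
    filter_upwards [this] with x hx using Finset.prod_congr rfl hx
  have hsm : StronglyMeasurable (fun y : ↥S → K => ∏ i : ↥S, F' i (y i)) := by
    refine Finset.stronglyMeasurable_fun_prod Finset.univ fun i _ => ?_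
    exact (hF'sm i).comp_measurable (measurable_pi_apply i)
  have step2 : ∫ x, ∏ r ∈ S, F' r (x r) ∂μ = ∫ y : ↥S → K, ∏ i : ↥S, F' i (y i) := by
    rw [← hmapπ, integral_map hπm.aemeasurable (by rw [hmapπ]; exact hsm.aestronglyMeasurable)]
    congr 1
    ext x
    rw [← Finset.prod_coe_sort S (fun r => F' r (x r))]
  have step3 : ∫ y : ↥S → K, ∏ i : ↥S, F' i (y i) = ∏ i : ↥S, ∫ k, F' i k ∂κ := by
    exact integral_fintype_prod_eq_prod (fun i : ↥S => F' i)
  rw [step1, step2, step3]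
  rw [← Finset.prod_coe_sort S (fun r => ∫ k, F r k ∂κ)]
  exact Finset.prod_congr rfl fun i _ => (integral_congr_ae (hF'ae i)).symm

/-- For a Bernoulli shift `G ↷ (K^G, κ^G)` with `f ∈ L²(κ)` of mean zero and norm
one, and finite sets `R_n ⊆ G` with `g·R_n ≠ h·R_k` whenever `(g,n) ≠ (h,k)`, the
functions `ζ_{n,g}(x) = ∏_{r ∈ g·R_n} f(x r)` form an orthonormal family in
`L²(κ^G)`, and `ζ_{n,g} = ρ(g) ζ_{n,1}` for the Koopman representation
`(ρ(g)F)(x) = F(g⁻¹·x)` of the shift `(g·x)(t) = x(g⁻¹ t)`. -/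
theorem stmt12 {K : Type*} [MeasurableSpace K] (κ : Measure K) [IsProbabilityMeasure κ]
    {G : Type*} [Group G] [Countable G] [Infinite G] [DecidableEq G]
    (μ : Measure (G → K)) [IsProbabilityMeasure μ]
    (hμ : ∀ (R : Finset G) (A : G → Set K), (∀ r, MeasurableSet (A r)) →
      μ {x | ∀ r ∈ R, x r ∈ A r} = ∏ r ∈ R, κ (A r))
    (f : K → ℂ) (hf : MemLp f 2 κ)
    (hmean : ∫ x, f x ∂κ = 0) (hnorm : ∫ x, ‖f x‖ ^ 2 ∂κ = 1)
    (R : ℕ → Finset G)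
    (hR : ∀ (g h : G) (n k : ℕ), (g, n) ≠ (h, k) →
      (R n).image (fun r => g * r) ≠ (R k).image (fun r => h * r)) :
    (∀ (g h : G) (n k : ℕ), (g, n) ≠ (h, k) →
      ∫ x, (∏ r ∈ (R n).image (fun r => g * r), f (x r)) *
        (starRingEnd ℂ) (∏ r ∈ (R k).image (fun r => h * r), f (x r)) ∂μ = 0) ∧
    (∀ (g : G) (n : ℕ),
      ∫ x, ‖∏ r ∈ (R n).image (fun r => g * r), f (x r)‖ ^ 2 ∂μ = 1) ∧
    (∀ (g : G) (n : ℕ),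
      (fun x : G → K => ∏ r ∈ (R n).image (fun r => g * r), f (x r)) =
        (fun x : G → K => ∏ r ∈ (R n).image (fun r => (1 : G) * r), f ((fun t => x (g * t)) r))) := by
  classical
  have hfm : AEStronglyMeasurable f κ := hf.1
  refine ⟨?_, ?_, ?_⟩
  · -- orthogonality
    intro g h n k hne
    set S₁ := (R n).image (fun r => g * r) with hS₁
    set S₂ := (R k).image (fun r => h * r) with hS₂
    have hSne : S₁ ≠ S₂ := hR g h n k hne
    set F : G → K → ℂ := fun r c =>
      (if r ∈ S₁ then f c else 1) * (if r ∈ S₂ then (starRingEnd ℂ) (f c) else 1) with hF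
    have hprod : ∀ x : G → K,
        (∏ r ∈ S₁, f (x r)) * (starRingEnd ℂ) (∏ r ∈ S₂, f (x r)) =
          ∏ r ∈ S₁ ∪ S₂, F r (x r) := by
      intro x
      rw [map_prod, hF]
      simp only
      rw [Finset.prod_mul_distrib, Finset.prod_ite_mem, Finset.prod_ite_mem,
        Finset.union_inter_cancel_left, Finset.union_inter_cancel_right]
    have hFmeas : ∀ r, AEStronglyMeasurable (F r) κ := by
      intro r
      refine AEStronglyMeasurable.mul ?_ ?_
      · by_cases hr : r ∈ S₁ <;> simp [hr] <;> first | exact hfm | exact aestronglyMeasurable_const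
      · by_cases hr : r ∈ S₂ <;> simp [hr]
        · exact RCLike.continuous_conj.comp_aestronglyMeasurable hfm
        · exact aestronglyMeasurable_const
    calc ∫ x, (∏ r ∈ S₁, f (x r)) * (starRingEnd ℂ) (∏ r ∈ S₂, f (x r)) ∂μ
        = ∫ x, ∏ r ∈ S₁ ∪ S₂, F r (x r) ∂μ := by simp_rw [hprod]
      _ = ∏ r ∈ S₁ ∪ S₂, ∫ c, F r c ∂κ := key_lemma κ μ hμ _ F hFmeas
      _ = 0 := by
          have hex : ∃ r ∈ S₁ ∪ S₂, (r ∈ S₁ ∧ r ∉ S₂) ∨ (r ∈ S₂ ∧ r ∉ S₁) := by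
            by_contra hc
            push_neg at hc
            exact hSne (Finset.ext fun r => by
              have := hc r
              by_cases h1 : r ∈ S₁ <;> by_cases h2 : r ∈ S₂ <;>
                simp_all [Finset.mem_union])
          obtain ⟨r₀, hr₀mem, hr₀⟩ := hex
          refine Finset.prod_eq_zero hr₀mem ?_
          rcases hr₀ with ⟨h1, h2⟩ | ⟨h2, h1⟩
          · simp only [hF, h1, h2, if_true, if_false, mul_one]
            exact hmean
          · simp only [hF, h1, h2, if_true, if_false, one_mul]
            rw [integral_conj, hmean, map_zero]
  · -- normalization
    intro g n
    set S := (R n).image (fun r => g * r) with hS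
    have : ∀ x : G → K, ‖∏ r ∈ S, f (x r)‖ ^ 2 = ∏ r ∈ S, ‖f (x r)‖ ^ 2 := by
      intro x
      rw [norm_prod, ← Finset.prod_pow]
    simp_rw [this]
    rw [key_lemma κ μ hμ S (fun _ c => ‖f c‖ ^ 2) (fun _ => hfm.norm.pow 2)]
    exact Finset.prod_eq_one fun r _ => hnorm
  · -- equivariance
    intro g n
    funext x
    simp only [one_mul, Finset.image_id, Finset.image_id']
    rw [Finset.prod_image (fun a _ b _ hab => mul_left_cancel hab)]
end

section
/- Let G be a countably infinite group. There exists a sequence (R_n)_{n∈ℕ} of finite subsets of G such that for all g, h ∈ G and n, k ∈ ℕ, if g ≠ h or n ≠ k then g·R_n ≠ h·R_k. Consequently, the Koopman representation of the Bernoulli shift G ↷ (K^G, κ^G) with (K, κ) nontrivial contains the left-regular representation with infinite multiplicity on the orthocomplement of the constants. -/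
open MeasureTheory
open scoped ENNReal

section Helpers
open Finset
open scoped ComplexConjugate

-- ===== Part A =====
variable {G : Type} [Group G] [DecidableEq G]

/-- A finite set with trivial left stabilizer. -/
private def GoodSet (S : Finset G) : Prop := ∀ g : G, S.image (fun r => g * r) = S → g = 1

theorem goodset_base [Infinite G] :
    ∃ S : Finset G, (1 : G) ∈ S ∧ S.card = 3 ∧ GoodSet S := by
  obtain ⟨a, ha⟩ := exists_ne (1 : G)
  obtain ⟨b, hb⟩ := Infinite.exists_notMem_finset ({1, a, a * a, a⁻¹} : Finset G)
  simp only [mem_insert, mem_singleton, not_or] at hb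
  obtain ⟨hb1, hba, hba2, hbainv⟩ := hb
  refine ⟨{1, a, b}, by simp, ?_, ?_⟩
  · rw [card_insert_of_notMem (by simp [ha.symm, Ne.symm hb1]),
      card_insert_of_notMem (by simp [Ne.symm hba]), card_singleton]
  · intro g hg
    have hmem : ∀ x ∈ ({1, a, b} : Finset G), g * x ∈ ({1, a, b} : Finset G) := by
      intro x hx; rw [← hg]; exact mem_image_of_mem _ hx
    have hgmem := hmem 1 (by simp)
    rw [mul_one] at hgmem
    simp only [mem_insert, mem_singleton] at hgmem
    rcases hgmem with h1 | h1 | h1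
    · exact h1
    · -- g = a
      subst h1
      have h2 := hmem g (by simp)
      have h3 := hmem b (by simp)
      simp only [mem_insert, mem_singleton] at h2 h3
      exfalso
      rcases h3 with h3 | h3 | h3
      · exact hbainv ((inv_eq_of_mul_eq_one_right h3).symm)
      · exact hb1 (mul_left_cancel (a := g) (by rw [h3, mul_one]))
      · exact ha (mul_right_cancel (b := b) (by rw [h3, one_mul]))
    · -- g = b
      subst h1
      have h3 := hmem a (by simp)
      simp only [mem_insert, mem_singleton] at h3
      exfalso
      rcases h3 with h3 | h3 | h3
      · exact hbainv (eq_inv_of_mul_eq_one_left h3)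
      · exact hb1 (mul_right_cancel (b := a) (by rw [h3, one_mul]))
      · exact ha (mul_left_cancel (a := g) (by rw [h3, mul_one]))

theorem goodset_step [Infinite G] (S : Finset G) (h1 : (1:G) ∈ S) (hcard : 2 ≤ S.card)
    (hS : GoodSet S) : ∃ x, x ∉ S ∧ GoodSet (insert x S) := by
  obtain ⟨r₀, hr₀S, hr₀⟩ := S.exists_mem_ne (by omega) 1
  obtain ⟨x, hx⟩ := Infinite.exists_notMem_finset
    (S ∪ S.biUnion (fun g => S.image (fun s => g⁻¹ * s)) ∪ S.image (fun s => s * r₀⁻¹))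
  simp only [mem_union, mem_biUnion, mem_image, not_or, not_exists, not_and] at hx
  obtain ⟨⟨hxS, hx2⟩, hx3⟩ := hx
  refine ⟨x, hxS, ?_⟩
  intro g hg
  by_contra hg1
  have hmem : ∀ y ∈ insert x S, g * y ∈ insert x S := by
    intro y hy; rw [← hg]; exact mem_image_of_mem _ hy
  have hgmem := hmem 1 (by simp [h1])
  rw [mul_one, mem_insert] at hgmem
  rcases hgmem with h | h
  · -- g = x
    subst h
    have h2 := hmem r₀ (by simp [hr₀S])
    rw [mem_insert] at h2
    rcases h2 with h2 | h2
    · exact hr₀ (by rwa [mul_eq_left] at h2)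
    · exact hx3 _ h2 (by group)
  · -- g ∈ S
    have h2 := hmem x (by simp)
    rw [mem_insert] at h2
    rcases h2 with h2 | h2
    · exact hg1 (by rwa [mul_eq_right] at h2)
    · exact hx2 g h _ h2 (by group)

theorem exists_good_family (G : Type) [Group G] [Infinite G] [DecidableEq G] :
    ∃ R : ℕ → Finset G, (∀ n, (R n).Nonempty) ∧
      ∀ (g h : G) (n k : ℕ), g ≠ h ∨ n ≠ k →
        (R n).image (fun r => g * r) ≠ (R k).image (fun r => h * r) := by
  obtain ⟨S0, hS01, hS0card, hS0good⟩ := goodset_base (G := G)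
  have step := goodset_step (G := G)
  classical
  let Φ : Finset G → Finset G := fun S =>
    if h : (1:G) ∈ S ∧ 2 ≤ S.card ∧ GoodSet S then
      insert (step S h.1 h.2.1 h.2.2).choose S else S
  refine ⟨fun n => Φ^[n] S0, ?_, ?_⟩
  all_goals {
    have key : ∀ n, (1:G) ∈ Φ^[n] S0 ∧ GoodSet (Φ^[n] S0) ∧ (Φ^[n] S0).card = n + 3 := by
      intro n
      induction n with
      | zero => exact ⟨hS01, hS0good, hS0card⟩
      | succ n ih =>
        obtain ⟨ih1, ih2, ih3⟩ := ih
        rw [Function.iterate_succ_apply']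
        have hcond : (1:G) ∈ Φ^[n] S0 ∧ 2 ≤ (Φ^[n] S0).card ∧ GoodSet (Φ^[n] S0) :=
          ⟨ih1, by omega, ih2⟩
        have hspec := (step _ hcond.1 hcond.2.1 hcond.2.2).choose_spec
        simp only [Φ, dif_pos hcond]
        exact ⟨mem_insert_of_mem ih1, hspec.2,
          by rw [card_insert_of_notMem hspec.1, ih3]⟩
    first
    | · intro n; exact card_pos.mp (by rw [(key n).2.2]; omega)
    | · intro g h n k hne heq
        have hinj : ∀ (a : G) (m : ℕ), ((Φ^[m] S0).image (fun r => a * r)).card = m + 3 := by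
          intro a m
          rw [card_image_of_injective _ (mul_right_injective a), (key m).2.2]
        have hnk : n = k := by
          have := hinj g n; rw [heq, hinj h k] at this; omega
        subst hnk
        have : (Φ^[n] S0).image (fun r => (h⁻¹ * g) * r) = Φ^[n] S0 := by
          have h5 := congrArg (Finset.image (fun r => h⁻¹ * r)) heq
          rw [image_image, image_image] at h5
          simp only [Function.comp_def, ← mul_assoc, inv_mul_cancel, one_mul, image_id'] at h5
          exact h5
        have := (key n).2.1 _ this
        have hgh : g = h := by
          have : h * (h⁻¹ * g) = h * 1 := by rw [this]
          simpa [mul_assoc] using this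
        rcases hne with h' | h' <;> exact h' (by simp [hgh])
  }


-- ===== Part B =====
variable {K : Type} [MeasurableSpace K]

theorem master_integral (κ : Measure K) [IsProbabilityMeasure κ]
    (A : Set K) (hA : MeasurableSet A)
    (μ : Measure (G → K)) [IsProbabilityMeasure μ]
    (hprod : ∀ (F : Finset G) (B : G → Set K), (∀ r, MeasurableSet (B r)) →
      μ {x | ∀ r ∈ F, x r ∈ B r} = ∏ r ∈ F, κ (B r))
    (F : Finset G) (c d : G → ℂ) [DecidableEq G] [DecidablePred (· ∈ A)] :
    ∫ x, ∏ r ∈ F, (if x r ∈ A then c r else d r) ∂μ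
      = ∏ r ∈ F, (c r * ((κ A).toReal : ℂ) + d r * (1 - ((κ A).toReal : ℂ))) := by
  classical
  set p : ℝ := (κ A).toReal with hp
  -- the cylinder sets
  set B : Finset G → G → Set K := fun T r => if r ∈ T then A else Aᶜ with hB
  have hBmeas : ∀ T r, MeasurableSet (B T r) := by
    intro T r; by_cases h : r ∈ T <;> simp [hB, h, hA, hA.compl]
  set S : Finset G → Set (G → K) := fun T => {x | ∀ r ∈ F, x r ∈ B T r} with hSdef
  have hSmeas : ∀ T, MeasurableSet (S T) := by
    intro T
    have : S T = ⋂ r ∈ F, (fun x : G → K => x r) ⁻¹' (B T r) := by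
      ext x; simp [hSdef, Set.mem_iInter]
    rw [this]
    exact MeasurableSet.biInter F.countable_toSet
      (fun r _ => (hBmeas T r).preimage (measurable_pi_apply r))
  -- pointwise expansion of the product
  have hpt : ∀ x : G → K,
      ∏ r ∈ F, (if x r ∈ A then c r else d r)
        = ∑ T ∈ F.powerset,
            ((∏ r ∈ T, c r) * ∏ r ∈ F \ T, d r) * (S T).indicator (fun _ => (1:ℂ)) x := by
    intro x
    have h1 : ∀ r, (if x r ∈ A then c r else d r)
        = (if x r ∈ A then c r else 0) + (if x r ∈ A then 0 else d r) := by
      intro r; split_ifs <;> ring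
    simp only [h1]
    rw [Finset.prod_add]
    refine Finset.sum_congr rfl fun T hT => ?_
    rw [Finset.mem_powerset] at hT
    have h2 : ∏ r ∈ T, (if x r ∈ A then c r else 0)
        = (∏ r ∈ T, c r) * (if ∀ r ∈ T, x r ∈ A then 1 else 0) := by
      rw [← Finset.prod_boole (p := fun r => x r ∈ A), ← Finset.prod_mul_distrib]
      exact Finset.prod_congr rfl fun r _ => by split_ifs <;> ring
    have h3 : ∏ r ∈ F \ T, (if x r ∈ A then 0 else d r)
        = (∏ r ∈ F \ T, d r) * (if ∀ r ∈ F \ T, x r ∉ A then 1 else 0) := by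
      rw [← Finset.prod_boole (p := fun r => x r ∉ A), ← Finset.prod_mul_distrib]
      exact Finset.prod_congr rfl fun r _ => by by_cases h : x r ∈ A <;> simp [h]
    rw [h2, h3]
    have hiff : x ∈ S T ↔ ((∀ r ∈ T, x r ∈ A) ∧ ∀ r ∈ F \ T, x r ∉ A) := by
      simp only [hSdef, Set.mem_setOf_eq, Finset.mem_sdiff, hB]
      constructor
      · intro h
        constructor
        · intro r hr
          have := h r (hT hr); rwa [if_pos hr] at this
        · intro r hr
          have := h r hr.1; rwa [if_neg hr.2] at this
      · rintro ⟨hin, hout⟩ r hr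
        by_cases h : r ∈ T
        · rw [if_pos h]; exact hin r h
        · rw [if_neg h]; exact hout r ⟨hr, h⟩
    rw [Set.indicator_apply]
    by_cases hP : ∀ r ∈ T, x r ∈ A
    · by_cases hQ : ∀ r ∈ F \ T, x r ∉ A
      · rw [if_pos hP, if_pos hQ, if_pos (hiff.mpr ⟨hP, hQ⟩)]; ring
      · rw [if_pos hP, if_neg hQ, if_neg (fun h => hQ (hiff.mp h).2)]; ring
    · rw [if_neg hP, if_neg (fun h => hP (hiff.mp h).1)]; ring
  rw [integral_congr_ae (Filter.Eventually.of_forall hpt)]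
  rw [integral_finset_sum _ (fun T _ => by
    exact (Integrable.indicator (integrable_const (1:ℂ)) (hSmeas T)).const_mul _)]
  -- compute each integral
  have hint : ∀ T ∈ F.powerset,
      ∫ x, ((∏ r ∈ T, c r) * ∏ r ∈ F \ T, d r) * (S T).indicator (fun _ => (1:ℂ)) x ∂μ
        = ((∏ r ∈ T, c r) * ∏ r ∈ F \ T, d r) *
            ((p : ℂ) ^ T.card * ((1:ℂ) - p) ^ (F \ T).card) := by
    intro T hT
    rw [Finset.mem_powerset] at hT
    rw [integral_const_mul, integral_indicator_const _ (hSmeas T)]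
    congr 1
    have hμS : μ (S T) = ∏ r ∈ F, κ (B T r) := hprod F (B T) (hBmeas T)
    have hκB : ∀ r, (κ (B T r)).toReal = if r ∈ T then p else 1 - p := by
      intro r
      by_cases h : r ∈ T
      · simp [hB, h, hp]
      · simp only [hB, if_neg h]
        rw [prob_compl_eq_one_sub hA, ENNReal.toReal_sub_of_le prob_le_one ENNReal.one_ne_top,
          ENNReal.toReal_one]
    have key : (μ (S T)).toReal = p ^ T.card * (1 - p) ^ (F \ T).card := by
      rw [hμS, ENNReal.toReal_prod, ← Finset.prod_sdiff hT]
      have e1 : ∏ r ∈ F \ T, (κ (B T r)).toReal = (1 - p) ^ (F \ T).card := by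
        rw [Finset.prod_congr rfl (fun r hr => by
          rw [hκB r, if_neg (Finset.mem_sdiff.mp hr).2]), Finset.prod_const]
      have e2 : ∏ r ∈ T, (κ (B T r)).toReal = p ^ T.card := by
        rw [Finset.prod_congr rfl (fun r hr => by rw [hκB r, if_pos hr]), Finset.prod_const]
      rw [e1, e2]; ring
    rw [Complex.real_smul, mul_one,
      show ((μ.real (S T)) : ℂ) = ((p ^ T.card * (1 - p) ^ (F \ T).card : ℝ) : ℂ) from
        congrArg _ key]
    push_cast
    ring
  rw [Finset.sum_congr rfl hint]
  -- resum
  rw [Finset.prod_add]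
  refine Finset.sum_congr rfl fun T hT => ?_
  rw [Finset.mem_powerset] at hT
  rw [Finset.prod_mul_distrib, Finset.prod_mul_distrib]
  simp only [Finset.prod_const]
  ring


section Phi

/-- The mean-zero, variance-one step function attached to `A` and `p`. -/
noncomputable def phiC (A : Set K) [DecidablePred (· ∈ A)] (p : ℝ) : K → ℂ :=
  fun y => if y ∈ A then (Real.sqrt ((1 - p) / p) : ℂ) else -(Real.sqrt (p / (1 - p)) : ℂ)

theorem phi_key0 {p : ℝ} (h0 : 0 < p) (h1 : p < 1) :
    (Real.sqrt ((1 - p) / p) : ℂ) * (p : ℂ)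
      + (-(Real.sqrt (p / (1 - p)) : ℂ)) * (1 - (p : ℂ)) = 0 := by
  have e1 : Real.sqrt ((1 - p) / p) * p = Real.sqrt ((1 - p) * p) := by
    rw [show (1 - p) * p = (1 - p) / p * p ^ 2 by field_simp,
      Real.sqrt_mul (div_nonneg (by linarith) h0.le), Real.sqrt_sq h0.le]
  have e2 : Real.sqrt (p / (1 - p)) * (1 - p) = Real.sqrt (p * (1 - p)) := by
    rw [show p * (1 - p) = p / (1 - p) * (1 - p) ^ 2 by
        rw [div_mul_eq_mul_div, pow_two, ← mul_assoc, mul_div_assoc,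
          div_self (by linarith : (1:ℝ) - p ≠ 0), mul_one],
      Real.sqrt_mul (div_nonneg h0.le (by linarith)), Real.sqrt_sq (by linarith)]
  have hreal : Real.sqrt ((1 - p) / p) * p - Real.sqrt (p / (1 - p)) * (1 - p) = 0 := by
    rw [e1, e2, mul_comm (1 - p) p, sub_self]
  calc (Real.sqrt ((1 - p) / p) : ℂ) * (p : ℂ)
      + (-(Real.sqrt (p / (1 - p)) : ℂ)) * (1 - (p : ℂ))
      = ((Real.sqrt ((1 - p) / p) * p - Real.sqrt (p / (1 - p)) * (1 - p) : ℝ) : ℂ) := by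
        push_cast; ring
    _ = 0 := by rw [hreal]; simp

theorem phi_key1 {p : ℝ} (h0 : 0 < p) (h1 : p < 1) :
    ((Real.sqrt ((1 - p) / p) : ℂ) * (Real.sqrt ((1 - p) / p) : ℂ)) * (p : ℂ)
      + ((-(Real.sqrt (p / (1 - p)) : ℂ)) * (-(Real.sqrt (p / (1 - p)) : ℂ)))
        * (1 - (p : ℂ)) = 1 := by
  have e1 : Real.sqrt ((1 - p) / p) * Real.sqrt ((1 - p) / p) = (1 - p) / p :=
    Real.mul_self_sqrt (div_nonneg (by linarith) h0.le)
  have e2 : Real.sqrt (p / (1 - p)) * Real.sqrt (p / (1 - p)) = p / (1 - p) :=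
    Real.mul_self_sqrt (div_nonneg h0.le (by linarith))
  have hreal : (Real.sqrt ((1 - p) / p) * Real.sqrt ((1 - p) / p)) * p
      + (Real.sqrt (p / (1 - p)) * Real.sqrt (p / (1 - p))) * (1 - p) = 1 := by
    rw [e1, e2, div_mul_cancel₀ _ (ne_of_gt h0), div_mul_cancel₀ _ (by linarith : (1:ℝ) - p ≠ 0)]
    ring
  calc ((Real.sqrt ((1 - p) / p) : ℂ) * (Real.sqrt ((1 - p) / p) : ℂ)) * (p : ℂ)
      + ((-(Real.sqrt (p / (1 - p)) : ℂ)) * (-(Real.sqrt (p / (1 - p)) : ℂ))) * (1 - (p : ℂ))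
      = (((Real.sqrt ((1 - p) / p) * Real.sqrt ((1 - p) / p)) * p
          + (Real.sqrt (p / (1 - p)) * Real.sqrt (p / (1 - p))) * (1 - p) : ℝ) : ℂ) := by
        push_cast; ring
    _ = 1 := by rw [hreal]; simp

variable (κ : Measure K) [IsProbabilityMeasure κ] (A : Set K) [DecidablePred (· ∈ A)]
  (μ : Measure (G → K)) [IsProbabilityMeasure μ]

theorem conj_phiC (p : ℝ) (y : K) [DecidablePred (· ∈ A)] :
    (starRingEnd ℂ) (phiC A p y) = phiC A p y := by
  simp [phiC, apply_ite (starRingEnd ℂ), Complex.conj_ofReal]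

theorem integral_prod_phi_zero
    (hA : MeasurableSet A)
    (hprod : ∀ (F : Finset G) (B : G → Set K), (∀ r, MeasurableSet (B r)) →
      μ {x | ∀ r ∈ F, x r ∈ B r} = ∏ r ∈ F, κ (B r))
    (h0 : 0 < (κ A).toReal) (h1 : (κ A).toReal < 1)
    (S : Finset G) (hS : S.Nonempty) :
    ∫ x, ∏ r ∈ S, phiC A (κ A).toReal (x r) ∂μ = 0 := by
  set p := (κ A).toReal with hp
  have hm := master_integral κ A hA μ hprod S
    (fun _ => (Real.sqrt ((1 - p) / p) : ℂ)) (fun _ => -(Real.sqrt (p / (1 - p)) : ℂ))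
  rw [show (fun x : G → K => ∏ r ∈ S, phiC A p (x r))
      = fun x : G → K => ∏ r ∈ S,
          (if x r ∈ A then (Real.sqrt ((1 - p) / p) : ℂ)
            else -(Real.sqrt (p / (1 - p)) : ℂ)) from rfl]
  rw [hm]
  exact Finset.prod_eq_zero hS.choose_spec (phi_key0 h0 h1)

theorem integral_prod_phi_mul
    (hA : MeasurableSet A)
    (hprod : ∀ (F : Finset G) (B : G → Set K), (∀ r, MeasurableSet (B r)) →
      μ {x | ∀ r ∈ F, x r ∈ B r} = ∏ r ∈ F, κ (B r))
    (h0 : 0 < (κ A).toReal) (h1 : (κ A).toReal < 1)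
    (S T : Finset G) :
    ∫ x, (∏ r ∈ S, phiC A (κ A).toReal (x r)) * ∏ r ∈ T, phiC A (κ A).toReal (x r) ∂μ
      = if S = T then 1 else 0 := by
  classical
  set p := (κ A).toReal with hp
  set α : ℂ := (Real.sqrt ((1 - p) / p) : ℂ) with hα
  set β : ℂ := -(Real.sqrt (p / (1 - p)) : ℂ) with hβ
  set C : G → ℂ := fun r => (if r ∈ S then α else 1) * (if r ∈ T then α else 1) with hC
  set D : G → ℂ := fun r => (if r ∈ S then β else 1) * (if r ∈ T then β else 1) with hD
  have hpt : ∀ x : G → K,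
      (∏ r ∈ S, phiC A p (x r)) * ∏ r ∈ T, phiC A p (x r)
        = ∏ r ∈ S ∪ T, (if x r ∈ A then C r else D r) := by
    intro x
    have hval : ∀ (U : Finset G), U ⊆ S ∪ T →
        ∏ r ∈ U, phiC A p (x r)
          = ∏ r ∈ S ∪ T, (if r ∈ U then phiC A p (x r) else 1) := by
      intro U hU
      rw [← Finset.prod_subset hU (fun r _ hr => if_neg hr)]
      exact Finset.prod_congr rfl fun r hr => (if_pos hr).symm
    rw [hval S Finset.subset_union_left, hval T Finset.subset_union_right,
      ← Finset.prod_mul_distrib]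
    refine Finset.prod_congr rfl fun r _ => ?_
    simp only [phiC, hC, hD]
    by_cases h1' : r ∈ S <;> by_cases h2' : r ∈ T <;> by_cases h3' : x r ∈ A <;>
      simp [h1', h2', h3'] <;> ring
  rw [integral_congr_ae (Filter.Eventually.of_forall hpt), master_integral κ A hA μ hprod]
  by_cases hST : S = T
  · subst hST
    rw [if_pos rfl, Finset.union_self]
    refine Finset.prod_eq_one fun r hr => ?_
    simp only [hC, hD, if_pos hr]
    exact phi_key1 h0 h1
  · rw [if_neg hST]
    have : ∃ r, ¬(r ∈ S ↔ r ∈ T) := by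
      by_contra h
      push_neg at h
      exact hST (Finset.ext fun r => h r)
    obtain ⟨r₀, hr₀⟩ := this
    rw [not_iff] at hr₀
    refine Finset.prod_eq_zero (i := r₀) ?_ ?_
    · rcases Decidable.em (r₀ ∈ S) with h | h
      · exact Finset.mem_union_left _ h
      · exact Finset.mem_union_right _ (hr₀.mp h)
    · rcases Decidable.em (r₀ ∈ S) with h | h
      · have h' : r₀ ∉ T := fun hT' => (hr₀.mpr hT') h
        simp only [hC, hD, if_pos h, if_neg h', mul_one]
        exact phi_key0 h0 h1
      · have h' : r₀ ∈ T := hr₀.mp h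
        simp only [hC, hD, if_neg h, if_pos h', one_mul]
        exact phi_key0 h0 h1

theorem memℒp_prod_phi (p : ℝ) (hA : MeasurableSet A) (S : Finset G) :
    MemLp (fun x : G → K => ∏ r ∈ S, phiC A p (x r)) 2 μ := by
  have hmeas : Measurable fun x : G → K => ∏ r ∈ S, phiC A p (x r) := by
    refine Finset.measurable_prod S fun r _ => ?_
    exact Measurable.ite (measurable_pi_apply r hA) measurable_const measurable_const
  refine MemLp.of_bound hmeas.aestronglyMeasurable
    ((max ‖(Real.sqrt ((1 - p) / p) : ℂ)‖ ‖(-(Real.sqrt (p / (1 - p)) : ℂ) : ℂ)‖) ^ S.card)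
    (Filter.Eventually.of_forall fun x => ?_)
  rw [norm_prod]
  calc ∏ r ∈ S, ‖phiC A p (x r)‖
      ≤ ∏ _r ∈ S, (max ‖(Real.sqrt ((1 - p) / p) : ℂ)‖ ‖(-(Real.sqrt (p / (1 - p)) : ℂ) : ℂ)‖) := by
        refine Finset.prod_le_prod (fun r _ => norm_nonneg _) fun r _ => ?_
        simp only [phiC]
        split_ifs
        · exact le_max_left _ _
        · exact le_max_right _ _
    _ = _ := by rw [Finset.prod_const]

end Phi


-- ===== Glue =====
theorem lp_clm_ext {ι E : Type*} [DecidableEq ι] [NormedAddCommGroup E] [NormedSpace ℂ E]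
    {T₁ T₂ : lp (fun _ : ι => ℂ) 2 →L[ℂ] E}
    (h : ∀ (i : ι) (a : ℂ), T₁ (lp.single 2 i a) = T₂ (lp.single 2 i a)) :
    T₁ = T₂ := by
  ext f
  have hs := lp.hasSum_single (E := fun _ : ι => ℂ) (p := 2) ENNReal.ofNat_ne_top f
  have h1 : HasSum (fun i => T₁ (lp.single 2 i (f i))) (T₁ f) := hs.mapL T₁
  have h2 := hs.mapL T₂
  rw [show (fun i => T₂ (lp.single 2 i (f i))) = fun i => T₁ (lp.single 2 i (f i)) from
    funext fun i => (h i (f i)).symm] at h2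
  exact h1.unique h2

end Helpers

/-- The linear isometry of `ℓ²` spaces induced by reindexing along an equivalence. -/
noncomputable def lpCongr {α β : Type*} (e : α ≃ β) :
    lp (fun _ : β => ℂ) 2 →ₗᵢ[ℂ] lp (fun _ : α => ℂ) 2 where
  toFun f := ⟨fun a => f (e a), by
    apply memℓp_gen
    exact (e.summable_iff (f := fun b => ‖f b‖ ^ (2 : ℝ≥0∞).toReal)).2
      ((memℓp_gen_iff (by norm_num)).1 (lp.memℓp f))⟩
  map_add' f g := rfl
  map_smul' c f := rfl
  norm_map' f := by
    rw [lp.norm_eq_tsum_rpow (by norm_num), lp.norm_eq_tsum_rpow (by norm_num)]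
    congr 1
    exact e.tsum_eq (fun b => ‖f b‖ ^ (2 : ℝ≥0∞).toReal)

theorem lpCongr_single {α β : Type*} [DecidableEq α] [DecidableEq β] (e : α ≃ β)
    (i : β) (a : ℂ) :
    lpCongr e (lp.single 2 i a) = lp.single 2 (e.symm i) a := by
  apply Subtype.ext
  funext x
  change (lp.single 2 i a : ∀ _ : β, ℂ) (e x) = (lp.single 2 (e.symm i) a : ∀ _ : α, ℂ) x
  by_cases h : x = e.symm i
  · subst h
    simp [lp.single_apply, e.apply_symm_apply]
  · have h2 : ¬ e x = i := fun h' => h (by rw [← h', e.symm_apply_apply])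
    simp [lp.single_apply, h, h2]

/-- In a countably infinite group `G` there is a sequence of finite sets `R_n` with
`g·R_n ≠ h·R_k` whenever `(g,n) ≠ (h,k)`. Consequently, for any nontrivial
probability space `(K,κ)`, the Koopman representation of the Bernoulli shift
`G ↷ (K^G, κ^G)` contains the left-regular representation with infinite
multiplicity on the orthocomplement of the constants: there is a `G`-equivariant
linear isometry from `ℓ²(G × ℕ)` into `L²(κ^G)` with range orthogonal to the
constants. -/
theorem stmt13 {G : Type} [Group G] [Countable G] [Infinite G] [DecidableEq G] :
    ∃ R : ℕ → Finset G,
      (∀ (g h : G) (n k : ℕ), g ≠ h ∨ n ≠ k →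
        (R n).image (fun r => g * r) ≠ (R k).image (fun r => h * r)) ∧
      (∀ (K : Type) (_ : MeasurableSpace K) (κ : Measure K), IsProbabilityMeasure κ →
        (∃ A : Set K, MeasurableSet A ∧ 0 < κ A ∧ κ A < 1) →
        ∀ (μ : Measure (G → K)), IsProbabilityMeasure μ →
        (∀ (F : Finset G) (A : G → Set K), (∀ r, MeasurableSet (A r)) →
          μ {x | ∀ r ∈ F, x r ∈ A r} = ∏ r ∈ F, κ (A r)) →
        ∀ hinv : ∀ g : G, MeasurePreserving (fun (x : G → K) (t : G) => x (g * t)) μ μ,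
        ∃ V : lp (fun _ : G × ℕ => ℂ) 2 →ₗᵢ[ℂ] Lp ℂ 2 μ,
          (∀ (t : G) (f : lp (fun _ : G × ℕ => ℂ) 2),
            V (lpCongr (Equiv.prodCongr (Equiv.mulLeft t⁻¹) (Equiv.refl ℕ)) f) =
              (Lp.compMeasurePreservingₗᵢ ℂ (fun (x : G → K) (t' : G) => x (t * t'))
                (hinv t)) (V f)) ∧
          (∀ f, ∫ x, (V f) x ∂μ = 0)) := by
  obtain ⟨R, hRne, hRinj⟩ := exists_good_family G
  refine ⟨R, hRinj, ?_⟩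
  intro K mK κ hκ hAex μ hμ hprod hinv
  haveI := hκ; haveI := hμ
  obtain ⟨A, hA, hA0, hA1⟩ := hAex
  classical
  set p : ℝ := (κ A).toReal with hp
  have h0 : 0 < p := ENNReal.toReal_pos hA0.ne' (measure_ne_top κ A)
  have h1 : p < 1 := by
    have : (κ A).toReal < (1 : ℝ≥0∞).toReal :=
      (ENNReal.toReal_lt_toReal (measure_ne_top κ A) ENNReal.one_ne_top).2 hA1
    simpa using this
  -- the orthonormal family
  set Fsets : G × ℕ → Finset G := fun i => (R i.2).image (fun r => i.1 * r) with hFsets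
  have hFne : ∀ i, (Fsets i).Nonempty := fun i => (hRne i.2).image _
  have hmem : ∀ i : G × ℕ, MemLp (fun x : G → K => ∏ r ∈ Fsets i, phiC A p (x r)) 2 μ :=
    fun i => memℒp_prod_phi A μ p hA (Fsets i)
  set v : G × ℕ → Lp ℂ 2 μ := fun i => (hmem i).toLp _ with hv
  have hFinjset : ∀ i j : G × ℕ, i ≠ j → Fsets i ≠ Fsets j := by
    intro i j hij
    have : i.1 ≠ j.1 ∨ i.2 ≠ j.2 := by
      by_contra h
      push_neg at h
      exact hij (Prod.ext h.1 h.2)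
    exact hRinj i.1 j.1 i.2 j.2 this
  have hinner : ∀ i j : G × ℕ, inner ℂ (v i) (v j) = if i = j then (1:ℂ) else 0 := by
    intro i j
    rw [MeasureTheory.L2.inner_def]
    have heq : ∀ᵐ x ∂μ, (inner ℂ ((v i : Lp ℂ 2 μ) x) ((v j : Lp ℂ 2 μ) x) : ℂ)
        = (∏ r ∈ Fsets i, phiC A p (x r)) * ∏ r ∈ Fsets j, phiC A p (x r) := by
      filter_upwards [(hmem i).coeFn_toLp, (hmem j).coeFn_toLp] with x hxi hxj
      rw [RCLike.inner_apply', hxi, hxj, map_prod]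
      congr 1
      exact Finset.prod_congr rfl fun r _ => conj_phiC A p _
    rw [integral_congr_ae heq,
      integral_prod_phi_mul κ A μ hA hprod h0 h1 (Fsets i) (Fsets j)]
    by_cases hij : i = j
    · rw [if_pos hij, if_pos (by rw [hij])]
    · rw [if_neg hij, if_neg (hFinjset i j hij)]
  have horth : Orthonormal ℂ v := by
    rw [orthonormal_iff_ite]
    intro i j
    rw [hinner i j]
  set V : lp (fun _ : G × ℕ => ℂ) 2 →ₗᵢ[ℂ] Lp ℂ 2 μ :=
    horth.orthogonalFamily.linearIsometry with hV
  have hVsingle : ∀ (i : G × ℕ) (a : ℂ), V (lp.single 2 i a) = a • v i := by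
    intro i a
    rw [hV, OrthogonalFamily.linearIsometry_apply_single,
      LinearIsometry.toSpanSingleton_apply]
  refine ⟨V, ?_, ?_⟩
  · -- equivariance
    intro t f
    set e : (G × ℕ) ≃ (G × ℕ) := Equiv.prodCongr (Equiv.mulLeft t⁻¹) (Equiv.refl ℕ) with he
    have hesymm : ∀ i : G × ℕ, e.symm i = (t * i.1, i.2) := by
      rintro ⟨g, n⟩
      simp [he, Equiv.prodCongr_symm, Equiv.mulLeft_symm, Equiv.prodCongr_apply]
    set W : Lp ℂ 2 μ →ₗᵢ[ℂ] Lp ℂ 2 μ :=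
      Lp.compMeasurePreservingₗᵢ ℂ (fun (x : G → K) (t' : G) => x (t * t')) (hinv t) with hW
    have hcomp : ∀ i : G × ℕ, W (v i) = v (t * i.1, i.2) := by
      intro i
      have hFim : Fsets (t * i.1, i.2) = (Fsets i).image (fun r => t * r) := by
        simp only [hFsets, Finset.image_image]
        exact Finset.image_congr (fun r _ => (mul_assoc t i.1 r))
      have hfun : ((fun x : G → K => ∏ r ∈ Fsets i, phiC A p (x r)) ∘
            (fun (x : G → K) (t' : G) => x (t * t')))
          = fun x : G → K => ∏ r ∈ Fsets (t * i.1, i.2), phiC A p (x r) := by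
        funext x
        rw [hFim, Finset.prod_image (fun a _ b _ h => mul_left_cancel h)]
        rfl
      show Lp.compMeasurePreserving _ (hinv t) ((hmem i).toLp _) = _
      rw [Lp.toLp_compMeasurePreserving]
      exact MemLp.toLp_congr _ _ (Filter.Eventually.of_forall fun x => congrFun hfun x)
    have hT : V.toContinuousLinearMap.comp (lpCongr e).toContinuousLinearMap
        = W.toContinuousLinearMap.comp V.toContinuousLinearMap := by
      apply lp_clm_ext
      intro i a
      simp only [ContinuousLinearMap.comp_apply, LinearIsometry.coe_toContinuousLinearMap]
      rw [lpCongr_single, hVsingle, hesymm, hVsingle, LinearIsometry.map_smul, hcomp]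
    have := ContinuousLinearMap.ext_iff.1 hT f
    simpa only [ContinuousLinearMap.comp_apply, LinearIsometry.coe_toContinuousLinearMap,
      hW] using this
  · -- zero integral
    intro f
    set one : Lp ℂ 2 μ := (memLp_const (1:ℂ)).toLp _ with hone
    have hinner1 : ∀ g : Lp ℂ 2 μ, (inner ℂ one g : ℂ) = ∫ x, g x ∂μ := by
      intro g
      rw [MeasureTheory.L2.inner_def]
      apply integral_congr_ae
      filter_upwards [MemLp.coeFn_toLp (memLp_const (1:ℂ))] with x hx
      rw [RCLike.inner_apply']
      rw [← hone] at hx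
      rw [hx]
      simp
    have hJ : (innerSL ℂ one).comp V.toContinuousLinearMap = 0 := by
      apply lp_clm_ext
      intro i a
      simp only [ContinuousLinearMap.comp_apply, LinearIsometry.coe_toContinuousLinearMap,
        ContinuousLinearMap.zero_apply, innerSL_apply_apply]
      rw [hVsingle, inner_smul_right, hinner1]
      have hz : ∫ x, ((v i : Lp ℂ 2 μ) x) ∂μ = 0 := by
        rw [integral_congr_ae ((hmem i).coeFn_toLp)]
        exact integral_prod_phi_zero κ A μ hA hprod h0 h1 (Fsets i) (hFne i)
      rw [hz, mul_zero]
    have hzero := ContinuousLinearMap.ext_iff.1 hJ f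
    simp only [ContinuousLinearMap.comp_apply, LinearIsometry.coe_toContinuousLinearMap,
      ContinuousLinearMap.zero_apply, innerSL_apply_apply] at hzero
    rw [← hinner1 (V f), hzero]
end
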